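/- Let f(n, k) denote the number of words in [k]^n avoiding the generalized pattern 12-3. Then for every integer k ≥ 1, the identity (∑_{n ≥ 0} f(n, k)·x^n) · ∏_{j=0}^{k-1} ((1 - x)^j - x) = (1 - x)^(k(k-1)/2) holds as an identity of formal power series over ℚ. -/

import Mathlib

open PowerSeries

/-- The `i`-th letter (1-based value in `{1,…,k}`) of a word `w ∈ [k]^n`,
with value `0` outside the word. -/
def letter {n k : ℕ} (w : Fin n → Fin k) (i : ℕ) : ℕ :=
  if h : i < n then (w ⟨i, h⟩ : ℕ) + 1 else 0

/-- `w` avoids the generalized pattern 12-3: there are no 0-based indices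
`i, j` with `i + 2 ≤ j < n` such that `w i < w (i+1) < w j`. -/
def Avoids12d3 {n k : ℕ} (w : Fin n → Fin k) : Prop :=
  ∀ i j : ℕ, i + 2 ≤ j → j < n →
    ¬ (letter w i < letter w (i + 1) ∧ letter w (i + 1) < letter w j)

/-- The number of words in `[k]^n` avoiding 12-3. -/
noncomputable def f (n k : ℕ) : ℕ := Nat.card {w : Fin n → Fin k // Avoids12d3 w}

-- basics
lemma letter_le {n k : ℕ} (w : Fin n → Fin k) (i : ℕ) : letter w i ≤ k := by
  unfold letter; split
  · exact (w _).2
  · exact Nat.zero_le _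

lemma letter_of_lt {n k : ℕ} (w : Fin n → Fin k) {i : ℕ} (h : i < n) :
    letter w i = (w ⟨i, h⟩ : ℕ) + 1 := dif_pos h

lemma letter_of_ge {n k : ℕ} (w : Fin n → Fin k) {i : ℕ} (h : n ≤ i) :
    letter w i = 0 := dif_neg (by omega)

lemma letter_pos {n k : ℕ} (w : Fin n → Fin k) {i : ℕ} (h : i < n) :
    1 ≤ letter w i := by rw [letter_of_lt w h]; omega

lemma letter_congr {n k k' : ℕ} {w : Fin n → Fin k} {w' : Fin n → Fin k'}
    (h : ∀ i : Fin n, (w i : ℕ) = (w' i : ℕ)) : letter w = letter w' := by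
  funext i; unfold letter; split
  · rw [h]
  · rfl

def Av (L : ℕ → ℕ) : Prop := ∀ i j : ℕ, i + 2 ≤ j → ¬ (L i < L (i+1) ∧ L (i+1) < L j)

lemma avoids_iff {n k : ℕ} (w : Fin n → Fin k) : Avoids12d3 w ↔ Av (letter w) := by
  constructor
  · intro h i j hij hC
    by_cases hj : j < n
    · exact h i j hij hj hC
    · have h0 : letter w j = 0 := letter_of_ge w (by omega)
      omega
  · intro h i j hij _; exact h i j hij

def Dec (L : ℕ → ℕ) : Prop := ∀ i : ℕ, L (i+1) ≤ L i

abbrev dW (n m : ℕ) : Type := {w : Fin n → Fin m // Dec (letter w)}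

noncomputable def d (n m : ℕ) : ℕ := Nat.card (dW n m)

lemma Dec.le_zero {L : ℕ → ℕ} (h : Dec L) : ∀ i, L i ≤ L 0 := by
  intro i; induction i with
  | zero => exact le_rfl
  | succ i ih => exact (h i).trans ih

lemma d_zero_left (m : ℕ) : d 0 m = 1 := by
  haveI : Unique (dW 0 m) :=
    { default := ⟨fun i => i.elim0, fun i => by simp [letter_of_ge]⟩
      uniq := fun w => Subtype.ext (funext fun i => i.elim0) }
  exact Nat.card_unique

lemma d_zero_right (n : ℕ) : d (n+1) 0 = 0 := by
  haveI : IsEmpty (dW (n+1) 0) := ⟨fun w => (w.1 0).elim0⟩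
  exact Nat.card_of_isEmpty

lemma letter_cons_succ {n m : ℕ} (a : Fin m) (v : Fin n → Fin m) (i : ℕ) :
    letter (Fin.cons a v : Fin (n+1) → Fin m) (i+1) = letter v i := by
  unfold letter
  by_cases h : i < n
  · rw [dif_pos (by omega : i + 1 < n + 1), dif_pos h]
    have e : (Fin.cons a v : Fin (n+1) → Fin m) ⟨i+1, by omega⟩ = v ⟨i, h⟩ := by
      have e2 : (⟨i+1, by omega⟩ : Fin (n+1)) = Fin.succ ⟨i, h⟩ := rfl
      rw [e2, Fin.cons_succ]
    rw [e]
  · rw [dif_neg (by omega), dif_neg h]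

lemma letter_cons_zero {n m : ℕ} (a : Fin m) (v : Fin n → Fin m) :
    letter (Fin.cons a v : Fin (n+1) → Fin m) 0 = (a : ℕ) + 1 := by
  rw [letter_of_lt _ (by omega : 0 < n+1)]
  norm_num

lemma d_rec (n m : ℕ) : d (n+1) (m+1) = d (n+1) m + d n (m+1) := by
  classical
  rw [d, d, d, ← Nat.card_sum]
  refine Nat.card_congr (Equiv.ofBijective ?_ ⟨?_, ?_⟩).symm
  · rintro (⟨w, hw⟩ | ⟨v, hv⟩)
    · refine ⟨fun i => (w i).castSucc, ?_⟩
      have : letter (fun i => (w i).castSucc) = letter w :=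
        letter_congr (fun i => by simp)
      rw [this]; exact hw
    · refine ⟨Fin.cons (Fin.last m) v, ?_⟩
      intro i
      cases i with
      | zero =>
        rw [letter_cons_succ, letter_cons_zero]
        have := letter_le v 0
        simp only [Fin.val_last]
        omega
      | succ i =>
        rw [letter_cons_succ, letter_cons_succ]
        exact hv i
  · rintro (⟨w, hw⟩ | ⟨v, hv⟩) (⟨w', hw'⟩ | ⟨v', hv'⟩) h <;>
      simp only [Subtype.mk.injEq] at h
    · have : w = w' := funext fun i => Fin.castSucc_injective _ (congrFun h i)
      simp [this]
    · exfalso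
      have h0 := congrFun (show (fun i => (w i).castSucc : Fin (n+1) → Fin (m+1)) = (Fin.cons (Fin.last m) v' : Fin (n+1) → Fin (m+1)) from congrArg Subtype.val h) 0
      rw [Fin.cons_zero] at h0
      exact absurd h0 (Fin.castSucc_lt_last _).ne
    · exfalso
      have h0 := congrFun (show (Fin.cons (Fin.last m) v : Fin (n+1) → Fin (m+1)) = (fun i => (w' i).castSucc : Fin (n+1) → Fin (m+1)) from congrArg Subtype.val h) 0
      rw [Fin.cons_zero] at h0
      exact absurd h0.symm (Fin.castSucc_lt_last _).ne
    · have : v = v' := funext fun i => by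
        have := congrFun (show (Fin.cons (Fin.last m) v : Fin (n+1) → Fin (m+1)) = (Fin.cons (Fin.last m) v' : Fin (n+1) → Fin (m+1)) from congrArg Subtype.val h) i.succ
        rwa [Fin.cons_succ, Fin.cons_succ] at this
      simp [this]
  · rintro ⟨w, hw⟩
    by_cases h0 : w 0 = Fin.last m
    · refine ⟨Sum.inr ⟨Fin.tail w, ?_⟩, ?_⟩
      · intro i
        have e : ∀ j : ℕ, letter (Fin.tail w) j = letter w (j+1) := by
          intro j
          conv_rhs => rw [← Fin.cons_self_tail w, letter_cons_succ]
        rw [e, e]; exact hw (i+1)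
      · refine Subtype.ext ?_
        show Fin.cons (Fin.last m) (Fin.tail w) = w
        rw [← h0]; exact Fin.cons_self_tail w
    · have hall : ∀ i : Fin (n+1), (w i : ℕ) < m := by
        intro i
        have h1 : (w i : ℕ) + 1 ≤ (w 0 : ℕ) + 1 := by
          have h1 := hw.le_zero (i : ℕ)
          rwa [letter_of_lt w i.2, letter_of_lt w (Nat.succ_pos n), Fin.eta,
            Fin.zero_eta] at h1
        have h2 : (w 0 : ℕ) ≠ m := fun he =>
          h0 (Fin.ext (by rw [he, Fin.val_last]))
        have h3 := (w 0).2
        omega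
      refine ⟨Sum.inl ⟨fun i => ⟨(w i : ℕ), hall i⟩, ?_⟩, ?_⟩
      · have : letter (fun i => (⟨(w i : ℕ), hall i⟩ : Fin m)) = letter w :=
          letter_congr (fun i => rfl)
        rw [this]; exact hw
      · exact Subtype.ext (funext fun i => Fin.ext rfl)

lemma d_mul_geom (m : ℕ) :
    (PowerSeries.mk fun n => (d n m : ℚ)) * (1 - X) ^ m = 1 := by
  induction m with
  | zero =>
    have : (PowerSeries.mk fun n => (d n 0 : ℚ)) = 1 := by
      ext n
      rw [coeff_mk]
      cases n with
      | zero => simp [d_zero_left]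
      | succ n => simp [d_zero_right, coeff_one]
    rw [this, pow_zero, mul_one]
  | succ m ih =>
    have key : (PowerSeries.mk fun n => (d n (m+1) : ℚ)) * (1 - X) =
        PowerSeries.mk fun n => (d n m : ℚ) := by
      ext n
      rw [mul_sub, mul_one, map_sub, coeff_mk]
      rw [mul_comm _ X]
      cases n with
      | zero =>
        rw [coeff_zero_X_mul, coeff_mk, sub_zero, d_zero_left, d_zero_left]
      | succ n =>
        rw [coeff_succ_X_mul, coeff_mk, coeff_mk]
        have := d_rec n m
        push_cast [this]
        ring
    calc (PowerSeries.mk fun n => (d n (m+1) : ℚ)) * (1 - X) ^ (m+1)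
        = ((PowerSeries.mk fun n => (d n (m+1) : ℚ)) * (1 - X)) * (1 - X) ^ m := by
          ring
      _ = 1 := by rw [key, ih]

abbrev W (n k : ℕ) : Type := {w : Fin n → Fin k // Avoids12d3 w}

def splice {n k : ℕ} (p : Fin n) (u : Fin (p : ℕ) → Fin k)
    (v : Fin (n - 1 - (p : ℕ)) → Fin (k+1)) : Fin n → Fin (k+1) :=
  fun i => if h : (i : ℕ) < (p : ℕ) then (u ⟨i, h⟩).castSucc
    else if h2 : (i : ℕ) = (p : ℕ) then Fin.last k
    else v ⟨(i : ℕ) - (p : ℕ) - 1, by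
      have := i.2; have := p.2; omega⟩

lemma letter_splice_of_lt {n k : ℕ} (p : Fin n) (u : Fin (p : ℕ) → Fin k)
    (v : Fin (n - 1 - (p : ℕ)) → Fin (k+1)) {i : ℕ} (h : i < (p : ℕ)) :
    letter (splice p u v) i = letter u i := by
  have hin : i < n := by have := p.2; omega
  rw [letter_of_lt _ hin, letter_of_lt _ h]
  have : splice p u v ⟨i, hin⟩ = (u ⟨i, h⟩).castSucc := dif_pos h
  rw [this, Fin.coe_castSucc]

lemma letter_splice_self {n k : ℕ} (p : Fin n) (u : Fin (p : ℕ) → Fin k)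
    (v : Fin (n - 1 - (p : ℕ)) → Fin (k+1)) :
    letter (splice p u v) (p : ℕ) = k + 1 := by
  rw [letter_of_lt _ p.2]
  have : splice p u v ⟨(p : ℕ), p.2⟩ = Fin.last k := by
    rw [splice, dif_neg (lt_irrefl _), dif_pos rfl]
  rw [this, Fin.val_last]

lemma letter_splice_of_gt {n k : ℕ} (p : Fin n) (u : Fin (p : ℕ) → Fin k)
    (v : Fin (n - 1 - (p : ℕ)) → Fin (k+1)) (j : ℕ) :
    letter (splice p u v) ((p : ℕ) + 1 + j) = letter v j := by
  by_cases hj : j < n - 1 - (p : ℕ)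
  · have h1 : (p : ℕ) + 1 + j < n := by have := p.2; omega
    rw [letter_of_lt _ h1, letter_of_lt _ hj]
    have : splice p u v ⟨(p : ℕ) + 1 + j, h1⟩ = v ⟨j, hj⟩ := by
      rw [splice, dif_neg (show ¬((p : ℕ) + 1 + j < (p : ℕ)) by omega),
        dif_neg (show ¬((p : ℕ) + 1 + j = (p : ℕ)) by omega)]
      congr 1
      exact Fin.ext (by simp; omega)
    rw [this]
  · rw [letter_of_ge _ (by have := p.2; omega), letter_of_ge _ (by omega)]

lemma splice_avoids {n k : ℕ} (p : Fin n) (u : Fin (p : ℕ) → Fin k)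
    (v : Fin (n - 1 - (p : ℕ)) → Fin (k+1)) (hu : Dec (letter u))
    (hv : Av (letter v)) : Avoids12d3 (splice p u v) := by
  rw [avoids_iff]
  rintro i j hij ⟨h1, h2⟩
  by_cases hi1 : i + 1 < (p : ℕ)
  · have e1 : letter (splice p u v) i = letter u i := letter_splice_of_lt p u v (by omega)
    have e2 : letter (splice p u v) (i+1) = letter u (i+1) := letter_splice_of_lt p u v hi1
    have := hu i
    omega
  by_cases hi2 : i + 1 = (p : ℕ)
  · have e2 : letter (splice p u v) (i+1) = k + 1 := by
      rw [hi2]; exact letter_splice_self p u v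
    have := letter_le (splice p u v) j
    omega
  by_cases hi3 : i = (p : ℕ)
  · have e1 : letter (splice p u v) i = k + 1 := by
      rw [hi3]; exact letter_splice_self p u v
    have := letter_le (splice p u v) (i+1)
    omega
  · -- i > p, so everything in the suffix
    have hip : (p : ℕ) < i := by omega
    obtain ⟨i', hi'⟩ : ∃ i', i = (p : ℕ) + 1 + i' := ⟨i - p - 1, by omega⟩
    obtain ⟨j', hj'⟩ : ∃ j', j = (p : ℕ) + 1 + j' := ⟨j - p - 1, by omega⟩
    have e1 : letter (splice p u v) i = letter v i' := by
      rw [hi']; exact letter_splice_of_gt p u v i'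
    have e2 : letter (splice p u v) (i+1) = letter v (i'+1) := by
      rw [show i + 1 = (p : ℕ) + 1 + (i'+1) by omega]
      exact letter_splice_of_gt p u v (i'+1)
    have e3 : letter (splice p u v) j = letter v j' := by
      rw [hj']; exact letter_splice_of_gt p u v j'
    exact hv i' j' (by omega) ⟨by omega, by omega⟩

lemma castSucc_avoids {n k : ℕ} (w : Fin n → Fin k) (hw : Avoids12d3 w) :
    Avoids12d3 (fun i => (w i).castSucc : Fin n → Fin (k+1)) := by
  have e : letter (fun i => (w i).castSucc : Fin n → Fin (k+1)) = letter w :=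
    letter_congr (fun i => by simp)
  unfold Avoids12d3
  rw [e]
  exact hw

def spliceMap {n k : ℕ} :
    (W n k ⊕ Σ p : Fin n, dW (p : ℕ) k × W (n - 1 - (p : ℕ)) (k+1)) → W n (k+1)
  | Sum.inl w => ⟨fun i => (w.1 i).castSucc, castSucc_avoids w.1 w.2⟩
  | Sum.inr ⟨p, u, v⟩ =>
      ⟨splice p u.1 v.1, splice_avoids p u.1 v.1 u.2 ((avoids_iff v.1).1 v.2)⟩

lemma spliceMap_bijective {n k : ℕ} : Function.Bijective (spliceMap (n := n) (k := k)) := by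
  classical
  constructor
  · rintro (⟨w, hw⟩ | ⟨p, ⟨u, hu⟩, ⟨v, hv⟩⟩) (⟨w', hw'⟩ | ⟨p', ⟨u', hu'⟩, ⟨v', hv'⟩⟩) h <;>
      simp only [spliceMap, Subtype.mk.injEq] at h
    · have : w = w' := funext fun i => Fin.castSucc_injective _ (congrFun h i)
      simp [this]
    · exfalso
      have hp := congrFun h p'
      have : splice p' u' v' p' = Fin.last k := by
        rw [splice, dif_neg (lt_irrefl _), dif_pos rfl]
      rw [this] at hp
      exact (Fin.castSucc_lt_last _).ne hp
    · exfalso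
      have hp := congrFun h p
      have : splice p u v p = Fin.last k := by
        rw [splice, dif_neg (lt_irrefl _), dif_pos rfl]
      rw [this] at hp
      exact (Fin.castSucc_lt_last _).ne hp.symm
    · have hpp : p = p' := by
        by_contra hne
        rcases Nat.lt_or_ge (p : ℕ) (p' : ℕ) with hlt | hge
        · have hp := congrFun h p
          have e1 : splice p u v p = Fin.last k := by
            rw [splice, dif_neg (lt_irrefl _), dif_pos rfl]
          have e2 : splice p' u' v' p = (u' ⟨p, hlt⟩).castSucc := dif_pos hlt
          rw [e1, e2] at hp
          exact (Fin.castSucc_lt_last _).ne hp.symm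
        · have hlt : (p' : ℕ) < (p : ℕ) := by
            rcases Nat.lt_or_ge (p' : ℕ) (p : ℕ) with h' | h'
            · exact h'
            · exact absurd (Fin.ext (le_antisymm h' hge) : p = p') hne
          have hp := congrFun h p'
          have e1 : splice p' u' v' p' = Fin.last k := by
            rw [splice, dif_neg (lt_irrefl _), dif_pos rfl]
          have e2 : splice p u v p' = (u ⟨p', hlt⟩).castSucc := dif_pos hlt
          rw [e1, e2] at hp
          exact (Fin.castSucc_lt_last _).ne hp
      subst hpp
      have hu'' : u = u' := by
        funext t
        have ht := congrFun h ⟨(t : ℕ), lt_trans t.2 p.2⟩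
        have e1 : splice p u v ⟨(t : ℕ), lt_trans t.2 p.2⟩ = (u t).castSucc := by
          rw [splice, dif_pos (show ((t : ℕ) : ℕ) < (p : ℕ) from t.2)]
        have e2 : splice p u' v' ⟨(t : ℕ), lt_trans t.2 p.2⟩ = (u' t).castSucc := by
          rw [splice, dif_pos (show ((t : ℕ) : ℕ) < (p : ℕ) from t.2)]
        rw [e1, e2] at ht
        exact Fin.castSucc_injective _ ht
      have hv'' : v = v' := by
        funext t
        have htn : (p : ℕ) + 1 + (t : ℕ) < n := by have := p.2; have := t.2; omega
        have ht := congrFun h ⟨(p : ℕ) + 1 + (t : ℕ), htn⟩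
        have e1 : splice p u v ⟨(p : ℕ) + 1 + (t : ℕ), htn⟩ = v t := by
          rw [splice, dif_neg (show ¬((p : ℕ) + 1 + (t : ℕ) < (p : ℕ)) by omega),
            dif_neg (show ¬((p : ℕ) + 1 + (t : ℕ) = (p : ℕ)) by omega)]
          congr 1
          exact Fin.ext (by simp; omega)
        have e2 : splice p u' v' ⟨(p : ℕ) + 1 + (t : ℕ), htn⟩ = v' t := by
          rw [splice, dif_neg (show ¬((p : ℕ) + 1 + (t : ℕ) < (p : ℕ)) by omega),
            dif_neg (show ¬((p : ℕ) + 1 + (t : ℕ) = (p : ℕ)) by omega)]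
          congr 1
          exact Fin.ext (by simp; omega)
        rw [e1, e2] at ht
        exact ht
      subst hu''; subst hv''
      rfl
  · rintro ⟨w, hw⟩
    by_cases hex : ∃ t : ℕ, ∃ ht : t < n, w ⟨t, ht⟩ = Fin.last k
    · set p₀ := Nat.find hex with hp₀def
      obtain ⟨hp₀n, hp₀⟩ := Nat.find_spec hex
      have hmin : ∀ t (htn : t < n), t < p₀ → w ⟨t, htn⟩ ≠ Fin.last k := by
        intro t htn ht hcon
        exact Nat.find_min hex ht ⟨htn, hcon⟩
      have hlt : ∀ t, t < p₀ → ∀ htn : t < n, (w ⟨t, htn⟩ : ℕ) < k := by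
        intro t ht htn
        have h1 := (w ⟨t, htn⟩).2
        have h2 : (w ⟨t, htn⟩ : ℕ) ≠ k := fun he =>
          hmin t htn ht (Fin.ext (by rw [he, Fin.val_last]))
        omega
      set p : Fin n := ⟨p₀, hp₀n⟩ with hpdef
      have hpv : (p : ℕ) = p₀ := by rw [hpdef]
      set u : Fin p₀ → Fin k := fun t =>
        ⟨(w ⟨(t : ℕ), by have := t.2; omega⟩ : ℕ), hlt t t.2 _⟩ with hudef
      set v : Fin (n - 1 - p₀) → Fin (k+1) := fun t =>
        w ⟨p₀ + 1 + (t : ℕ), by have := t.2; omega⟩ with hvdef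
      have hletter_u : ∀ t : ℕ, t < p₀ → ∀ htn : t < n,
          letter u t = (w ⟨t, htn⟩ : ℕ) + 1 := by
        intro t ht htn
        rw [letter_of_lt _ ht]
      have hwp : letter w p₀ = k + 1 := by
        rw [letter_of_lt _ hp₀n, hp₀, Fin.val_last]
      have hu : Dec (letter u) := by
        intro t
        by_cases ht : t + 1 < p₀
        · have htn : t + 1 < n := by omega
          have htn' : t < n := by omega
          rw [hletter_u (t+1) ht htn, hletter_u t (by omega) htn']
          by_contra hcon
          push_neg at hcon
          have hav := hw t p₀ (by omega) hp₀n
          rw [hwp] at hav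
          apply hav
          rw [letter_of_lt _ htn', letter_of_lt _ htn]
          have hb := hlt (t+1) ht htn
          constructor
          · omega
          · omega
        · rw [letter_of_ge _ (by omega : p₀ ≤ t + 1)]
          exact Nat.zero_le _
      have hletter_v : ∀ t : ℕ, letter v t = letter w (p₀ + 1 + t) := by
        intro t
        by_cases ht : t < n - 1 - p₀
        · rw [letter_of_lt _ ht, letter_of_lt _ (show p₀ + 1 + t < n by omega)]
        · rw [letter_of_ge _ (by omega), letter_of_ge _ (by omega)]
      have hv : Av (letter v) := by
        intro i j hij hcon
        rw [hletter_v, hletter_v, hletter_v] at hcon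
        have := (avoids_iff w).1 hw (p₀ + 1 + i) (p₀ + 1 + j) (by omega)
        rw [show p₀ + 1 + i + 1 = p₀ + 1 + (i + 1) by omega] at this
        exact this hcon
      refine ⟨Sum.inr ⟨p, ⟨u, hu⟩, ⟨v, (avoids_iff v).2 hv⟩⟩, ?_⟩
      apply Subtype.ext
      show splice p u v = w
      funext i
      rw [splice]
      split
      · next h =>
        exact Fin.ext (by simp [hudef])
      · split
        · next h h2 =>
          have : i = (⟨p₀, hp₀n⟩ : Fin n) := Fin.ext h2
          rw [this] at *
          exact hp₀.symm
        · next h h2 =>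
          rw [hvdef]
          exact congrArg w (Fin.ext
            (show p₀ + 1 + ((i : ℕ) - (p : ℕ) - 1) = (i : ℕ) by omega))
    · push_neg at hex
      have hall : ∀ i : Fin n, (w i : ℕ) < k := by
        intro i
        have h1 := (w i).2
        have h2 : (w i : ℕ) ≠ k := fun he => by
          have : w ⟨(i : ℕ), i.2⟩ = Fin.last k := Fin.ext (by simp [he])
          exact hex (i : ℕ) i.2 this
        omega
      refine ⟨Sum.inl ⟨fun i => ⟨(w i : ℕ), hall i⟩, ?_⟩, ?_⟩
      · have e : letter (fun i => (⟨(w i : ℕ), hall i⟩ : Fin k)) = letter w :=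
          letter_congr (fun i => rfl)
        unfold Avoids12d3
        rw [e]
        exact hw
      · exact Subtype.ext (funext fun i => Fin.ext rfl)

lemma f_rec (n k : ℕ) :
    f n (k+1) = f n k + ∑ p ∈ Finset.range n, d p k * f (n - 1 - p) (k+1) := by
  classical
  have h1 : f n (k+1) =
      Nat.card (W n k ⊕ Σ p : Fin n, dW (p : ℕ) k × W (n - 1 - (p : ℕ)) (k+1)) :=
    Nat.card_congr (Equiv.ofBijective _ (spliceMap_bijective (n := n) (k := k))).symm
  rw [h1, Nat.card_sum]
  congr 1
  letI : ∀ p : Fin n, Fintype (dW (p : ℕ) k × W (n - 1 - (p : ℕ)) (k+1)) := fun p =>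
    Fintype.ofFinite _
  rw [Nat.card_eq_fintype_card, Fintype.card_sigma]
  rw [← Fin.sum_univ_eq_sum_range (fun p => d p k * f (n - 1 - p) (k+1))]
  congr 1
  funext p
  rw [← Nat.card_eq_fintype_card, Nat.card_prod]
  rfl

lemma f_ps_rec (k : ℕ) :
    (PowerSeries.mk fun n => (f n (k+1) : ℚ)) =
      (PowerSeries.mk fun n => (f n k : ℚ)) +
        X * ((PowerSeries.mk fun n => (d n k : ℚ)) *
          PowerSeries.mk fun n => (f n (k+1) : ℚ)) := by
  ext n
  rw [map_add, coeff_mk]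
  cases n with
  | zero =>
    rw [coeff_zero_X_mul, coeff_mk, add_zero]
    have := f_rec 0 k
    simp at this
    rw [this]
  | succ n =>
    rw [coeff_succ_X_mul, coeff_mk, coeff_mul,
      Finset.Nat.sum_antidiagonal_eq_sum_range_succ_mk]
    simp only [coeff_mk]
    have := f_rec (n+1) k
    rw [this]
    push_cast
    rfl

lemma f_key (k : ℕ) :
    (PowerSeries.mk fun n => (f n (k+1) : ℚ)) * ((1 - X) ^ k - X) =
      (PowerSeries.mk fun n => (f n k : ℚ)) * (1 - X) ^ k := by
  have hD := d_mul_geom k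
  have hR := f_ps_rec k
  set A := PowerSeries.mk fun n => (f n (k+1) : ℚ)
  set B := PowerSeries.mk fun n => (f n k : ℚ)
  set D := PowerSeries.mk fun n => (d n k : ℚ)
  calc A * ((1 - X) ^ k - X)
      = (B + X * (D * A)) * (1 - X) ^ k - A * X := by rw [← hR]; ring
    _ = B * (1 - X) ^ k + (D * (1 - X) ^ k) * (X * A) - A * X := by ring
    _ = B * (1 - X) ^ k := by rw [hD]; ring

lemma f_one (n : ℕ) : f n 1 = 1 := by
  classical
  have hav : ∀ w : Fin n → Fin 1, Avoids12d3 w := by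
    intro w
    rw [avoids_iff]
    rintro i j hij ⟨h1, h2⟩
    have hb := letter_le w (i+1)
    by_cases hi : i < n
    · have := letter_pos w hi
      omega
    · have : letter w (i+1) = 0 := letter_of_ge w (by omega)
      omega
  rw [f]
  rw [Nat.card_congr (Equiv.subtypeUnivEquiv hav)]
  simp [Nat.card_eq_fintype_card]

lemma F_one : (PowerSeries.mk fun n => (f n 1 : ℚ)) * (1 - X) = 1 := by
  ext n
  rw [mul_sub, mul_one, map_sub, coeff_mk, mul_comm _ X]
  cases n with
  | zero => simp [f_one]
  | succ n => simp [coeff_succ_X_mul, coeff_mk, f_one, coeff_one]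

theorem stmt10 (k : ℕ) (hk : 1 ≤ k) :
    (PowerSeries.mk fun n => (f n k : ℚ)) *
        ∏ j ∈ Finset.range k, ((1 - X) ^ j - X) =
      (1 - X : PowerSeries ℚ) ^ (k * (k - 1) / 2) := by
  induction k, hk using Nat.le_induction with
  | base =>
    simp only [Finset.prod_range_one, pow_zero]
    rw [show (1 : ℕ) * (1 - 1) / 2 = 0 by norm_num, pow_zero]
    exact F_one
  | succ k hk ih =>
    rw [Finset.prod_range_succ, show k + 1 - 1 = k from rfl]
    have hexp : (k + 1) * k / 2 = k * (k - 1) / 2 + k := by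
      have h1 : (k+1) * k / 2 = (k+1).choose 2 := by
        rw [Nat.choose_two_right]; norm_num
      have h2 : k * (k - 1) / 2 = k.choose 2 := by
        rw [Nat.choose_two_right]
      rw [h1, h2, Nat.choose_succ_succ k 1, Nat.choose_one_right, Nat.add_comm]
    rw [hexp, pow_add]
    calc (PowerSeries.mk fun n => (f n (k+1) : ℚ)) *
          ((∏ j ∈ Finset.range k, ((1 - X) ^ j - X)) * ((1 - X) ^ k - X))
        = ((PowerSeries.mk fun n => (f n (k+1) : ℚ)) * ((1 - X) ^ k - X)) *
            ∏ j ∈ Finset.range k, ((1 - X) ^ j - X) := by ring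
      _ = ((PowerSeries.mk fun n => (f n k : ℚ)) * (1 - X) ^ k) *
            ∏ j ∈ Finset.range k, ((1 - X) ^ j - X) := by rw [f_key]
      _ = ((PowerSeries.mk fun n => (f n k : ℚ)) *
            ∏ j ∈ Finset.range k, ((1 - X) ^ j - X)) * (1 - X) ^ k := by ring
      _ = (1 - X) ^ (k * (k - 1) / 2) * (1 - X) ^ k := by rw [ih]
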